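/- (Lemma 6(i), inequality part.) For every a ∈ (0,1), with v_a := (p1 − p2)/(1 − a), one has κ2*(−v_a) ≥ max(a·γ1, γ2)·v_a; moreover the inequality against a·γ1·v_a is strict unless a = s1 := κ1′(−γ1)/κ2′(−γ1), and the inequality against γ2·v_a is strict unless a = s2′ := κ1′(−γ2)/κ2′(−γ2). In particular γ(a) := κ2*(−v_a)/v_a satisfies γ(a) > max(a·γ1, γ2) for all a ∈ (0,1) with a ∉ {s1, s2′}. -/

import Mathlib

open Filter Topology

/-- If a real function has a nonzero derivative at a point, then some point has a
strictly larger value. -/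
lemma exists_gt_of_hasDerivAt_ne_zero {g : ℝ → ℝ} {x d : ℝ}
    (hg : HasDerivAt g d x) (hd : d ≠ 0) : ∃ y, g x < g y := by
  have hslope : Tendsto (slope g x) (𝓝[≠] x) (𝓝 d) :=
    hasDerivAt_iff_tendsto_slope.mp hg
  rcases lt_or_gt_of_ne hd with hneg | hpos
  · -- derivative negative: go left
    have hev : ∀ᶠ y in 𝓝[≠] x, slope g x y < 0 :=
      hslope.eventually (Filter.Tendsto.eventually_lt_const hneg tendsto_id)
    have hle : 𝓝[<] x ≤ 𝓝[≠] x :=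
      nhdsWithin_mono x (fun y hy => ne_of_lt hy)
    obtain ⟨y, hy, hyx⟩ := ((hev.filter_mono hle).and eventually_mem_nhdsWithin).exists
    refine ⟨y, ?_⟩
    have hxy : y - x < 0 := sub_neg.mpr hyx
    have : (g y - g x) / (y - x) < 0 := by
      simpa [slope_def_field, div_eq_div_iff] using hy
    rcases div_neg_iff.mp this with ⟨h1, h2⟩ | ⟨h1, h2⟩
    · linarith
    · linarith
  · have hev : ∀ᶠ y in 𝓝[≠] x, 0 < slope g x y :=
      hslope.eventually (Filter.Tendsto.eventually_const_lt hpos tendsto_id)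
    have hle : 𝓝[>] x ≤ 𝓝[≠] x :=
      nhdsWithin_mono x (fun y hy => ne_of_gt hy)
    obtain ⟨y, hy, hyx⟩ := ((hev.filter_mono hle).and eventually_mem_nhdsWithin).exists
    refine ⟨y, ?_⟩
    have hxy : 0 < y - x := sub_pos.mpr hyx
    have : 0 < (g y - g x) / (y - x) := by
      simpa [slope_def_field] using hy
    rcases div_pos_iff.mp this with ⟨h1, h2⟩ | ⟨h1, h2⟩
    · linarith
    · linarith

theorem gamma_a_strict_bound
    (p1 p2 : ℝ) (hp : p2 < p1)
    (κ1 κ2 : ℝ → ℝ)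
    (hκ2conv : StrictConvexOn ℝ Set.univ κ2) (hκ2diff : Differentiable ℝ κ2)
    (hκ1 : ∀ θ, κ1 θ = κ2 θ + (p1 - p2) * θ)
    (hκ2zero : κ2 0 = 0)
    (γ1 γ2 : ℝ) (hγ2pos : 0 < γ2) (hγ : γ2 < γ1)
    (hγ1root : κ1 (-γ1) = 0) (hγ2root : κ2 (-γ2) = 0)
    (s1 s2' : ℝ)
    (hs1 : s1 = deriv κ1 (-γ1) / deriv κ2 (-γ1))
    (hs2' : s2' = deriv κ1 (-γ2) / deriv κ2 (-γ2))
    (a : ℝ) (ha : a ∈ Set.Ioo (0 : ℝ) 1)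
    (va : ℝ) (hva : va = (p1 - p2) / (1 - a)) :
    ((max (a * γ1) γ2 * va : ℝ) : EReal) ≤ ⨆ θ : ℝ, ((-va * θ - κ2 θ : ℝ) : EReal) ∧
    (a ≠ s1 →
      ((a * γ1 * va : ℝ) : EReal) < ⨆ θ : ℝ, ((-va * θ - κ2 θ : ℝ) : EReal)) ∧
    (a ≠ s2' →
      ((γ2 * va : ℝ) : EReal) < ⨆ θ : ℝ, ((-va * θ - κ2 θ : ℝ) : EReal)) ∧
    (a ≠ s1 → a ≠ s2' →
      ((max (a * γ1) γ2 : ℝ) : EReal)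
        < (⨆ θ : ℝ, ((-va * θ - κ2 θ : ℝ) : EReal)) * ((va⁻¹ : ℝ) : EReal)) := by
  obtain ⟨ha0, ha1⟩ := ha
  have h1a : (0:ℝ) < 1 - a := by linarith
  have hvapos : 0 < va := by
    rw [hva]; exact div_pos (by linarith) h1a
  have hpv : p1 - p2 = (1 - a) * va := by
    rw [hva]; field_simp
  set g : ℝ → ℝ := fun θ => -va * θ - κ2 θ with hg
  -- values at the two special points
  have hκ2γ1 : κ2 (-γ1) = (p1 - p2) * γ1 := by
    have := hκ1 (-γ1); rw [hγ1root] at this; linarith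
  have hval1 : g (-γ1) = a * γ1 * va := by
    show -va * (-γ1) - κ2 (-γ1) = a * γ1 * va
    rw [hκ2γ1, hpv]; ring
  have hval2 : g (-γ2) = γ2 * va := by
    show -va * (-γ2) - κ2 (-γ2) = γ2 * va
    rw [hγ2root]; ring
  -- derivative facts
  have hder : ∀ x : ℝ, HasDerivAt g (-va - deriv κ2 x) x := by
    intro x
    rw [hg]
    exact (((hasDerivAt_id' x).const_mul (-va)).sub (hκ2diff x).hasDerivAt).congr_deriv (by ring)
  have hderκ1 : ∀ x : ℝ, deriv κ1 x = deriv κ2 x + (p1 - p2) := by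
    intro x
    have h : HasDerivAt κ1 (deriv κ2 x + (p1 - p2)) x := by
      have : HasDerivAt (fun θ => κ2 θ + (p1 - p2) * θ) (deriv κ2 x + (p1 - p2)) x := by
        exact ((hκ2diff x).hasDerivAt.add ((hasDerivAt_id' x).const_mul (p1 - p2))).congr_deriv (by ring)
      have hfe : κ1 = fun θ => κ2 θ + (p1 - p2) * θ := funext hκ1
      rw [hfe]; exact this
    exact h.deriv
  -- key strictness: if a ≠ sᵢ then the derivative of g at the point is nonzero
  have key : ∀ x : ℝ, a ≠ deriv κ1 x / deriv κ2 x → -va - deriv κ2 x ≠ 0 := by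
    intro x hne heq
    apply hne
    have hd2 : deriv κ2 x = -va := by linarith
    have hd2ne : deriv κ2 x ≠ 0 := by rw [hd2]; exact neg_ne_zero.mpr (ne_of_gt hvapos)
    rw [hderκ1 x, hd2, hpv, eq_div_iff (neg_ne_zero.mpr hvapos.ne')]
    ring
  -- the sup
  set S : EReal := ⨆ θ : ℝ, ((-va * θ - κ2 θ : ℝ) : EReal) with hS
  have hle : ∀ θ : ℝ, ((g θ : ℝ) : EReal) ≤ S := by
    intro θ; exact le_iSup (fun θ : ℝ => ((-va * θ - κ2 θ : ℝ) : EReal)) θ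
  have h1 : ((a * γ1 * va : ℝ) : EReal) ≤ S := by rw [← hval1]; exact hle _
  have h2 : ((γ2 * va : ℝ) : EReal) ≤ S := by rw [← hval2]; exact hle _
  have hstrict : ∀ x : ℝ, -va - deriv κ2 x ≠ 0 → ((g x : ℝ) : EReal) < S := by
    intro x hne
    obtain ⟨y, hy⟩ := exists_gt_of_hasDerivAt_ne_zero (hder x) hne
    exact lt_of_lt_of_le (EReal.coe_lt_coe_iff.mpr hy) (hle y)
  have h1s : a ≠ s1 → ((a * γ1 * va : ℝ) : EReal) < S := by
    intro hne
    rw [← hval1]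
    exact hstrict _ (key _ (hs1 ▸ hne))
  have h2s : a ≠ s2' → ((γ2 * va : ℝ) : EReal) < S := by
    intro hne
    rw [← hval2]
    exact hstrict _ (key _ (hs2' ▸ hne))
  refine ⟨?_, h1s, h2s, ?_⟩
  · rcases max_cases (a * γ1) γ2 with ⟨hm, _⟩ | ⟨hm, _⟩ <;> rw [hm]
    · exact h1
    · exact h2
  · intro hne1 hne2
    have hmax : ((max (a * γ1) γ2 * va : ℝ) : EReal) < S := by
      rcases max_cases (a * γ1) γ2 with ⟨hm, _⟩ | ⟨hm, _⟩ <;> rw [hm]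
      · exact h1s hne1
      · exact h2s hne2
    rcases eq_or_ne S ⊤ with hT | hT
    · rw [hT, EReal.top_mul_coe_of_pos (by positivity)]
      exact EReal.coe_lt_top _
    · have hB : S ≠ ⊥ := ne_bot_of_gt hmax
      lift S to ℝ using ⟨hT, hB⟩ with s hs
      rw [← EReal.coe_mul]
      rw [EReal.coe_lt_coe_iff] at hmax ⊢
      calc max (a * γ1) γ2 = max (a * γ1) γ2 * va * va⁻¹ := by
            field_simp
        _ < s * va⁻¹ := by
            apply mul_lt_mul_of_pos_right hmax (by positivity)
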